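/- For scalars c₁, c₂, c₃ ∈ ℂ, set ω := c₁ f_{α₁}e_{α₁} + c₂ f_{α₂}e_{α₂} + c₃ f_{α₁+α₂}e_{α₁+α₂} in the quantum exterior algebra Λ. If ω³ ≠ 0 then c₁ ≠ 0; equivalently, whenever c₁ = 0 one has ω³ = 0. (Hence no nondegenerate coinvariant 2-form on Ω²_q(F₃) is central, and Ω_q(F₃) admits no covariant Kähler structure.) -/

import Mathlib

noncomputable section

namespace QFlagExt

/-- The positive roots of `sl₃`: `a1 = α₁`, `a2 = α₂`, `a12 = α₁+α₂`. -/
inductive PosRoot : Type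
  | a1 | a2 | a12
deriving DecidableEq

instance instFintypePosRoot : Fintype PosRoot :=
  ⟨{PosRoot.a1, PosRoot.a2, PosRoot.a12}, fun x => by cases x <;> decide⟩

open PosRoot

/-- Position in the convex order `α₂ < α₁+α₂ < α₁`. -/
def pos : PosRoot → ℕ
  | a2 => 0
  | a12 => 1
  | a1 => 2

/-- The symmetric bilinear form `(·,·)` on the roots of `sl₃`. -/
def ip : PosRoot → PosRoot → ℤ
  | a1, a1 => 2
  | a2, a2 => 2
  | a12, a12 => 2
  | a1, a2 => -1
  | a2, a1 => -1
  | a1, a12 => 1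
  | a12, a1 => 1
  | a2, a12 => 1
  | a12, a2 => 1

/-- Generators of the quantum exterior algebra: `e γ` and `f γ` for `γ ∈ Δ⁺`. -/
inductive LGen : Type
  | e : PosRoot → LGen
  | f : PosRoot → LGen
deriving DecidableEq, Fintype

open LGen

/-- The generators viewed inside the free algebra. -/
def ce (x : LGen) : FreeAlgebra ℂ LGen := FreeAlgebra.ι ℂ x

/-- The defining relations of the quantum exterior algebra `Λ` of the full quantum
flag manifold of `O_q(SU₃)`. -/
inductive lrel (q : ℝ) : FreeAlgebra ℂ LGen → FreeAlgebra ℂ LGen → Prop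
  | ee (β γ : PosRoot) (h : pos β ≤ pos γ) :
      lrel q (ce (e γ) * ce (e β)) ((-((q : ℂ) ^ ip β γ)) • (ce (e β) * ce (e γ)))
  | ff (β γ : PosRoot) (h : pos β ≤ pos γ) :
      lrel q (ce (f γ) * ce (f β)) ((-((q : ℂ) ^ (-ip β γ))) • (ce (f β) * ce (f γ)))
  | ef (β γ : PosRoot) (h : β ≠ γ ∨ (β = a12 ∧ γ = a12)) :
      lrel q (ce (e γ) * ce (f β)) ((-((q : ℂ) ^ ip β γ)) • (ce (f β) * ce (e γ)))
  | ef1 :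
      lrel q (ce (e a1) * ce (f a1))
        ((-((q : ℂ) ^ (2 : ℤ))) • (ce (f a1) * ce (e a1))
          - ((q : ℂ) - (q : ℂ)⁻¹) • (ce (f a12) * ce (e a12)))
  | ef2 :
      lrel q (ce (e a2) * ce (f a2))
        ((-((q : ℂ) ^ (2 : ℤ))) • (ce (f a2) * ce (e a2))
          + ((q : ℂ) - (q : ℂ)⁻¹) • (ce (f a12) * ce (e a12)))

/-- The quantum exterior algebra `Λ`. -/
abbrev Lam (q : ℝ) := RingQuot (lrel q)

/-- The generators of `Λ`. -/
def gen (q : ℝ) (x : LGen) : Lam q := RingQuot.mkAlgHom ℂ (lrel q) (ce x)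

/-- The positive roots listed in the convex order. -/
def rootList : List PosRoot := [a2, a12, a1]

/-- The ordered monomial `e_{γ₁}⋯e_{γ_a}` over the roots in `s`, in increasing convex order. -/
def emon (q : ℝ) (s : Finset PosRoot) : Lam q :=
  ((rootList.filter fun γ => decide (γ ∈ s)).map fun γ => gen q (e γ)).prod

/-- The ordered monomial `f_{δ₁}⋯f_{δ_b}` over the roots in `s`, in increasing convex order. -/
def fmon (q : ℝ) (s : Finset PosRoot) : Lam q :=
  ((rootList.filter fun γ => decide (γ ∈ s)).map fun γ => gen q (f γ)).prod

/-- The PBW monomial `f_{δ₁}⋯f_{δ_b} e_{γ₁}⋯e_{γ_a}`. -/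
def mon (q : ℝ) (p : Finset PosRoot × Finset PosRoot) : Lam q :=
  fmon q p.1 * emon q p.2

end QFlagExt

namespace QFlagExt

open PosRoot LGen

section Aux

variable (q : ℝ)

lemma gen_rel {a b : FreeAlgebra ℂ LGen} (h : lrel q a b) :
    RingQuot.mkAlgHom ℂ (lrel q) a = RingQuot.mkAlgHom ℂ (lrel q) b :=
  RingQuot.mkAlgHom_rel ℂ h

lemma relE12E2 : gen q (e a12) * gen q (e a2)
    = (-(q:ℂ)) • (gen q (e a2) * gen q (e a12)) := by
  have h := gen_rel q (lrel.ee a2 a12 (by decide))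
  simp only [map_smul, map_mul] at h
  have hs : -((q:ℂ) ^ (ip a2 a12)) = -(q:ℂ) := by norm_num [ip, zpow_two, pow_two]
  rw [hs] at h
  exact h

lemma relF12F2 : gen q (f a12) * gen q (f a2)
    = (-(q:ℂ)⁻¹) • (gen q (f a2) * gen q (f a12)) := by
  have h := gen_rel q (lrel.ff a2 a12 (by decide))
  simp only [map_smul, map_mul] at h
  have hs : -((q:ℂ) ^ (-ip a2 a12)) = -(q:ℂ)⁻¹ := by norm_num [ip, zpow_two, pow_two]
  rw [hs] at h
  exact h

lemma relE12F2 : gen q (e a12) * gen q (f a2)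
    = (-(q:ℂ)) • (gen q (f a2) * gen q (e a12)) := by
  have h := gen_rel q (lrel.ef a2 a12 (Or.inl (by decide)))
  simp only [map_smul, map_mul] at h
  have hs : -((q:ℂ) ^ (ip a2 a12)) = -(q:ℂ) := by norm_num [ip, zpow_two, pow_two]
  rw [hs] at h
  exact h

lemma relE2F12 : gen q (e a2) * gen q (f a12)
    = (-(q:ℂ)) • (gen q (f a12) * gen q (e a2)) := by
  have h := gen_rel q (lrel.ef a12 a2 (Or.inl (by decide)))
  simp only [map_smul, map_mul] at h
  have hs : -((q:ℂ) ^ (ip a12 a2)) = -(q:ℂ) := by norm_num [ip, zpow_two, pow_two]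
  rw [hs] at h
  exact h

lemma relE12F12 : gen q (e a12) * gen q (f a12)
    = (-(q:ℂ)^2) • (gen q (f a12) * gen q (e a12)) := by
  have h := gen_rel q (lrel.ef a12 a12 (Or.inr ⟨rfl, rfl⟩))
  simp only [map_smul, map_mul] at h
  have hs : -((q:ℂ) ^ (ip a12 a12)) = -(q:ℂ)^2 := by norm_num [ip, zpow_two, pow_two]
  rw [hs] at h
  exact h

lemma relE2F2 : gen q (e a2) * gen q (f a2)
    = (-(q:ℂ)^2) • (gen q (f a2) * gen q (e a2))
      + ((q:ℂ) - (q:ℂ)⁻¹) • (gen q (f a12) * gen q (e a12)) := by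
  have h := gen_rel q lrel.ef2
  simp only [map_add, map_smul, map_mul] at h
  have hs : -((q:ℂ) ^ (2:ℤ)) = -(q:ℂ)^2 := by norm_num [zpow_two, pow_two]
  rw [hs] at h
  exact h

lemma sqE2 : gen q (e a2) * gen q (e a2) = 0 := by
  have h : gen q (e a2) * gen q (e a2)
      = (-(q:ℂ)^2) • (gen q (e a2) * gen q (e a2)) := by
    have h := gen_rel q (lrel.ee a2 a2 (le_refl _))
    simp only [map_smul, map_mul] at h
    have hs : -((q:ℂ) ^ (ip a2 a2)) = -(q:ℂ)^2 := by norm_num [ip, zpow_two, pow_two]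
    rw [hs] at h
    exact h
  have h1 : (1 + (q:ℂ)^2) • (gen q (e a2) * gen q (e a2)) = 0 := by
    rw [add_smul, one_smul]
    nth_rewrite 1 [h]
    module
  have hne : (1 + (q:ℂ)^2) ≠ 0 := by
    have : (1 + (q:ℂ)^2) = ((1 + q^2 : ℝ) : ℂ) := by push_cast; ring
    rw [this]
    exact_mod_cast (by positivity : (1:ℝ) + q^2 ≠ 0)
  exact (smul_eq_zero.mp h1).resolve_left hne

lemma sqE12 : gen q (e a12) * gen q (e a12) = 0 := by
  have h : gen q (e a12) * gen q (e a12)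
      = (-(q:ℂ)^2) • (gen q (e a12) * gen q (e a12)) := by
    have h := gen_rel q (lrel.ee a12 a12 (le_refl _))
    simp only [map_smul, map_mul] at h
    have hs : -((q:ℂ) ^ (ip a12 a12)) = -(q:ℂ)^2 := by norm_num [ip, zpow_two, pow_two]
    rw [hs] at h
    exact h
  have h1 : (1 + (q:ℂ)^2) • (gen q (e a12) * gen q (e a12)) = 0 := by
    rw [add_smul, one_smul]
    nth_rewrite 1 [h]
    module
  have hne : (1 + (q:ℂ)^2) ≠ 0 := by
    have : (1 + (q:ℂ)^2) = ((1 + q^2 : ℝ) : ℂ) := by push_cast; ring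
    rw [this]
    exact_mod_cast (by positivity : (1:ℝ) + q^2 ≠ 0)
  exact (smul_eq_zero.mp h1).resolve_left hne

lemma sqF2 : gen q (f a2) * gen q (f a2) = 0 := by
  have h : gen q (f a2) * gen q (f a2)
      = (-((q:ℂ)⁻¹)^2) • (gen q (f a2) * gen q (f a2)) := by
    have h := gen_rel q (lrel.ff a2 a2 (le_refl _))
    simp only [map_smul, map_mul] at h
    have hs : -((q:ℂ) ^ (-ip a2 a2)) = -((q:ℂ)⁻¹)^2 := by
      norm_num [ip, zpow_two, pow_two]
    rw [hs] at h
    exact h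
  have h1 : (1 + ((q:ℂ)⁻¹)^2) • (gen q (f a2) * gen q (f a2)) = 0 := by
    rw [add_smul, one_smul]
    nth_rewrite 1 [h]
    module
  have hne : (1 + ((q:ℂ)⁻¹)^2) ≠ 0 := by
    have : (1 + ((q:ℂ)⁻¹)^2) = ((1 + (q⁻¹)^2 : ℝ) : ℂ) := by push_cast; ring
    rw [this]
    exact_mod_cast (by positivity : (1:ℝ) + (q⁻¹)^2 ≠ 0)
  exact (smul_eq_zero.mp h1).resolve_left hne

lemma sqF12 : gen q (f a12) * gen q (f a12) = 0 := by
  have h : gen q (f a12) * gen q (f a12)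
      = (-((q:ℂ)⁻¹)^2) • (gen q (f a12) * gen q (f a12)) := by
    have h := gen_rel q (lrel.ff a12 a12 (le_refl _))
    simp only [map_smul, map_mul] at h
    have hs : -((q:ℂ) ^ (-ip a12 a12)) = -((q:ℂ)⁻¹)^2 := by
      norm_num [ip, zpow_two, pow_two]
    rw [hs] at h
    exact h
  have h1 : (1 + ((q:ℂ)⁻¹)^2) • (gen q (f a12) * gen q (f a12)) = 0 := by
    rw [add_smul, one_smul]
    nth_rewrite 1 [h]
    module
  have hne : (1 + ((q:ℂ)⁻¹)^2) ≠ 0 := by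
    have : (1 + ((q:ℂ)⁻¹)^2) = ((1 + (q⁻¹)^2 : ℝ) : ℂ) := by push_cast; ring
    rw [this]
    exact_mod_cast (by positivity : (1:ℝ) + (q⁻¹)^2 ≠ 0)
  exact (smul_eq_zero.mp h1).resolve_left hne

-- primed ("in-context") versions, for rewriting inside right-associated products

lemma relE12E2' (t : Lam q) : gen q (e a12) * (gen q (e a2) * t)
    = (-(q:ℂ)) • (gen q (e a2) * (gen q (e a12) * t)) := by
  rw [← mul_assoc, relE12E2, smul_mul_assoc, mul_assoc]

lemma relF12F2' (t : Lam q) : gen q (f a12) * (gen q (f a2) * t)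
    = (-(q:ℂ)⁻¹) • (gen q (f a2) * (gen q (f a12) * t)) := by
  rw [← mul_assoc, relF12F2, smul_mul_assoc, mul_assoc]

lemma relE12F2' (t : Lam q) : gen q (e a12) * (gen q (f a2) * t)
    = (-(q:ℂ)) • (gen q (f a2) * (gen q (e a12) * t)) := by
  rw [← mul_assoc, relE12F2, smul_mul_assoc, mul_assoc]

lemma relE2F12' (t : Lam q) : gen q (e a2) * (gen q (f a12) * t)
    = (-(q:ℂ)) • (gen q (f a12) * (gen q (e a2) * t)) := by
  rw [← mul_assoc, relE2F12, smul_mul_assoc, mul_assoc]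

lemma relE12F12' (t : Lam q) : gen q (e a12) * (gen q (f a12) * t)
    = (-(q:ℂ)^2) • (gen q (f a12) * (gen q (e a12) * t)) := by
  rw [← mul_assoc, relE12F12, smul_mul_assoc, mul_assoc]

lemma relE2F2' (t : Lam q) : gen q (e a2) * (gen q (f a2) * t)
    = (-(q:ℂ)^2) • (gen q (f a2) * (gen q (e a2) * t))
      + ((q:ℂ) - (q:ℂ)⁻¹) • (gen q (f a12) * (gen q (e a12) * t)) := by
  rw [← mul_assoc, relE2F2, add_mul, smul_mul_assoc, smul_mul_assoc, mul_assoc, mul_assoc]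

lemma sqE2' (t : Lam q) : gen q (e a2) * (gen q (e a2) * t) = 0 := by
  rw [← mul_assoc, sqE2, zero_mul]

lemma sqE12' (t : Lam q) : gen q (e a12) * (gen q (e a12) * t) = 0 := by
  rw [← mul_assoc, sqE12, zero_mul]

lemma sqF2' (t : Lam q) : gen q (f a2) * (gen q (f a2) * t) = 0 := by
  rw [← mul_assoc, sqF2, zero_mul]

lemma sqF12' (t : Lam q) : gen q (f a12) * (gen q (f a12) * t) = 0 := by
  rw [← mul_assoc, sqF12, zero_mul]

lemma omega_cube (c2 c3 : ℂ) :
    (c2 • (gen q (f a2) * gen q (e a2))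
      + c3 • (gen q (f a12) * gen q (e a12))) ^ 3 = 0 := by
  rw [pow_succ, pow_two]
  simp only [add_mul, mul_add, smul_mul_assoc, mul_smul_comm, smul_smul, smul_add,
    mul_assoc,
    relE2F2', relE12F12', relE12F2', relE2F12', relE12E2', relF12F2',
    sqE2', sqE12', sqF2', sqF12',
    relE2F2, relE12F12, relE12F2, relE2F12, relE12E2, relF12F2,
    sqE2, sqE12, sqF2, sqF12,
    smul_zero, mul_zero, zero_mul, add_zero, zero_add]

end Aux

theorem nondegenerate_needs_c1 (q : ℝ) (hq0 : 0 < q) (hq1 : q < 1) (c1 c2 c3 : ℂ) :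
    (c1 • (gen q (f a1) * gen q (e a1))
      + c2 • (gen q (f a2) * gen q (e a2))
      + c3 • (gen q (f a12) * gen q (e a12))) ^ 3 ≠ 0 → c1 ≠ 0 := by
  intro h hc1
  apply h
  rw [hc1, zero_smul, zero_add]
  exact omega_cube q c2 c3

end QFlagExt
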